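/- With the notation of a conformal perturbation, if D is invertible then D_h is invertible and D_h^{-1} [D_h, a]_{σ_h} = e^{-h} D^{-1} [D, σ_{h/2}(a)] e^h for all a in A. Consequently, for any a_0,...,a_p in A, Tr(γ D_h^{-1}[D_h, a_0]_{σ_h} ··· D_h^{-1}[D_h, a_p]_{σ_h}) = Tr(γ D^{-1}[D, σ_{h/2}(a_0)] ··· D^{-1}[D, σ_{h/2}(a_p)]), whenever both products are trace class. -/

import Mathlib

/-- `e^x` in the algebra of bounded operators. -/
noncomputable def cExp {H : Type*} [NormedAddCommGroup H] [InnerProductSpace ℂ H]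
    [CompleteSpace H] (x : H →L[ℂ] H) : H →L[ℂ] H :=
  NormedSpace.exp x

lemma exp_add_of_commute_C {H : Type*} [NormedAddCommGroup H] [InnerProductSpace ℂ H]
    [CompleteSpace H] {x y : H →L[ℂ] H} (hxy : Commute x y) :
    NormedSpace.exp (x + y) = NormedSpace.exp x * NormedSpace.exp y :=
  NormedSpace.exp_add_of_commute_of_mem_ball (𝕂 := ℂ) hxy
    ((NormedSpace.expSeries_radius_eq_top ℂ (H →L[ℂ] H)).symm ▸ edist_lt_top _ _)
    ((NormedSpace.expSeries_radius_eq_top ℂ (H →L[ℂ] H)).symm ▸ edist_lt_top _ _)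

lemma conj_prod_aux {M : Type*} [Monoid M] (E F : M) (hEF : E * F = 1) (hFE : F * E = 1)
    (l : List M) : (l.map fun c => F * c * E).prod = F * l.prod * E := by
  have hEF' : ∀ z : M, E * (F * z) = z := fun z => by rw [← mul_assoc, hEF, one_mul]
  induction l with
  | nil => simpa using hFE.symm
  | cons x xs ih =>
      rw [List.map_cons, List.prod_cons, ih]
      simp only [mul_assoc, hEF', List.prod_cons]

/-- In the conformally perturbed setting, if `D` is invertible (with inverse
`Dinv`) then `D_h = e^h D e^h` is invertible with inverse `e^{-h} D^{-1} e^{-h}`, one has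
`D_h^{-1} [D_h, a]_{σ_h} = e^{-h} D^{-1} [D, σ_{h/2}(a)] e^h`, and consequently for any
`a_0, …, a_p`,
`Tr(γ D_h^{-1}[D_h,a_0]_{σ_h} ⋯ D_h^{-1}[D_h,a_p]_{σ_h})
  = Tr(γ D^{-1}[D,σ_{h/2}(a_0)] ⋯ D^{-1}[D,σ_{h/2}(a_p)])`,
`Tr` being a tracial functional (the operator trace on trace-class products). -/
theorem stmt4 {H : Type*} [NormedAddCommGroup H] [InnerProductSpace ℂ H] [CompleteSpace H]
    (D Dinv γ h : H →L[ℂ] H) (hh : IsSelfAdjoint h)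
    (hD1 : D * Dinv = 1) (hD2 : Dinv * D = 1)
    (hγh : Commute γ h) (hγD : γ * D = -(D * γ))
    (Tr : (H →L[ℂ] H) →ₗ[ℂ] ℂ) (hTr : ∀ S T : H →L[ℂ] H, Tr (S * T) = Tr (T * S))
    (p : ℕ) (a : Fin (p + 1) → (H →L[ℂ] H)) :
    ((cExp (-h) * Dinv * cExp (-h)) * (cExp h * D * cExp h) = 1 ∧
      (cExp h * D * cExp h) * (cExp (-h) * Dinv * cExp (-h)) = 1) ∧
    (∀ b : H →L[ℂ] H,
      (cExp (-h) * Dinv * cExp (-h)) *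
          ((cExp h * D * cExp h) * b -
            (cExp (2 • h) * b * cExp (-(2 • h))) * (cExp h * D * cExp h)) =
        cExp (-h) *
            (Dinv * (D * (cExp h * b * cExp (-h)) - (cExp h * b * cExp (-h)) * D)) *
          cExp h) ∧
    Tr (γ * (List.ofFn fun i : Fin (p + 1) =>
          (cExp (-h) * Dinv * cExp (-h)) *
            ((cExp h * D * cExp h) * a i -
              (cExp (2 • h) * a i * cExp (-(2 • h))) * (cExp h * D * cExp h))).prod) =
      Tr (γ * (List.ofFn fun i : Fin (p + 1) =>
          Dinv * (D * (cExp h * a i * cExp (-h)) -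
            (cExp h * a i * cExp (-h)) * D)).prod) := by
  set E := cExp h with hE
  set F := cExp (-h) with hF
  have hEF : E * F = 1 := by
    rw [hE, hF, cExp, cExp, ← exp_add_of_commute_C ((Commute.refl h).neg_right),
      add_neg_cancel, NormedSpace.exp_zero]
  have hFE : F * E = 1 := by
    rw [hE, hF, cExp, cExp, ← exp_add_of_commute_C ((Commute.refl h).neg_left),
      neg_add_cancel, NormedSpace.exp_zero]
  have h2 : cExp (2 • h) = E * E := by
    rw [cExp, two_smul, exp_add_of_commute_C (Commute.refl h)]; rfl
  have h2' : cExp (-(2 • h)) = F * F := by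
    rw [cExp, two_smul, neg_add,
      exp_add_of_commute_C ((Commute.refl h).neg_left.neg_right)]; rfl
  have hEF' : ∀ z : H →L[ℂ] H, E * (F * z) = z := fun z => by
    rw [← mul_assoc, hEF, one_mul]
  have hFE' : ∀ z : H →L[ℂ] H, F * (E * z) = z := fun z => by
    rw [← mul_assoc, hFE, one_mul]
  have key : ∀ b : H →L[ℂ] H,
      (F * Dinv * F) * ((E * D * E) * b - (cExp (2 • h) * b * cExp (-(2 • h))) * (E * D * E)) =
        F * (Dinv * (D * (E * b * F) - (E * b * F) * D)) * E := by
    intro b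
    rw [h2, h2']
    simp only [mul_sub, sub_mul, mul_assoc, hEF', hFE', hEF, hFE, mul_one]
  refine ⟨⟨?_, ?_⟩, key, ?_⟩
  · simp only [mul_assoc, hFE']
    rw [← mul_assoc Dinv D, hD2, one_mul, hFE]
  · simp only [mul_assoc, hEF']
    rw [← mul_assoc D Dinv, hD1, one_mul, hEF]
  · have hγE : Commute γ E := hγh.exp_right
    have hγF : Commute γ F := hγh.neg_right.exp_right
    set c : Fin (p + 1) → (H →L[ℂ] H) := fun i =>
      Dinv * (D * (E * a i * F) - (E * a i * F) * D) with hc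
    have hlist : (List.ofFn fun i : Fin (p + 1) =>
        (F * Dinv * F) * ((E * D * E) * a i -
          (cExp (2 • h) * a i * cExp (-(2 • h))) * (E * D * E))) =
        (List.ofFn c).map fun x => F * x * E := by
      rw [List.map_ofFn]
      exact congrArg List.ofFn (funext fun i => key (a i))
    rw [hlist, conj_prod_aux E F hEF hFE]
    have h1 : γ * (F * (List.ofFn c).prod * E) = (γ * F * (List.ofFn c).prod) * E := by
      simp only [mul_assoc]
    have h2 : E * (γ * F * (List.ofFn c).prod) = γ * (List.ofFn c).prod := by
      rw [← mul_assoc, ← mul_assoc, ← hγE.eq, mul_assoc γ E F, hEF, mul_one]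
    rw [h1, hTr, h2]
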